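/- Every saturated G-transfer system is generated by its irreducible relations, i.e., by the set of pairs (K,H) with K → H such that K is a maximal proper subgroup of H. -/

import Mathlib

open Pointwise

/-- Conjugate of a subgroup: `conjS g H = g H g⁻¹`. -/
def conjS {G : Type} [Group G] (g : G) (H : Subgroup G) : Subgroup G :=
  MulAut.conj g • H

/-- A `G`-transfer system: a partial order on the subgroups of `G` refining
inclusion, closed under conjugation and restriction. -/
structure TransferSystem (G : Type) [Group G] where
  rel : Subgroup G → Subgroup G → Prop
  le_of_rel : ∀ K H : Subgroup G, rel K H → K ≤ H
  refl : ∀ H : Subgroup G, rel H H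
  antisymm : ∀ K H : Subgroup G, rel K H → rel H K → K = H
  trans : ∀ J K H : Subgroup G, rel J K → rel K H → rel J H
  conj : ∀ (K H : Subgroup G) (g : G), rel K H → rel (conjS g K) (conjS g H)
  res : ∀ K H L : Subgroup G, rel K H → L ≤ H → rel (K ⊓ L) L

/-- The transfer system generated by a relation `R`, described as a relation:
`genRel R K H` holds iff every transfer system containing `R` relates `K` to
`H`; i.e. it is the smallest transfer system containing `R`. -/
def genRel {G : Type} [Group G] (R : Subgroup G → Subgroup G → Prop)
    (K H : Subgroup G) : Prop :=
  ∀ T : TransferSystem G, (∀ A B, R A B → T.rel A B) → T.rel K H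

/-- A transfer system is saturated if `K → H` and `K ≤ L ≤ H` imply `K → L`
and `L → H`. -/
def TransferSystem.Saturated {G : Type} [Group G] (T : TransferSystem G) : Prop :=
  ∀ K L H : Subgroup G, T.rel K H → K ≤ L → L ≤ H → T.rel K L ∧ T.rel L H

/-- Every saturated `G`-transfer system is generated by its
irreducible relations, i.e. the pairs `(K, H)` with `K → H` and `K` a maximal
proper subgroup of `H`. -/
theorem stmt12 {G : Type} [Group G] [Finite G] (T : TransferSystem G)
    (hsat : T.Saturated) :
    ∀ K H : Subgroup G,
      T.rel K H ↔
        genRel (fun K H => T.rel K H ∧ K < H ∧ ∀ L : Subgroup G, K < L → L ≤ H → L = H)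
          K H := by
  intro K H
  constructor
  · intro hKH
    intro T' hT'
    -- strong induction on the size of H
    have main : ∀ n : ℕ, ∀ K H : Subgroup G, (H : Set G).ncard ≤ n → T.rel K H → T'.rel K H := by
      intro n
      induction n using Nat.strong_induction_on with
      | _ n ih =>
        intro K H hcard hKH
        by_cases heq : K = H
        · subst heq; exact T'.refl K
        · have hlt : K < H := lt_of_le_of_ne (T.le_of_rel K H hKH) heq
          obtain ⟨L, ⟨hKL, hLH⟩, hmax⟩ :=
            Set.Finite.exists_maximalFor id {L : Subgroup G | K ≤ L ∧ L < H}
              (Set.toFinite _) ⟨K, le_refl K, hlt⟩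
          have hirr : ∀ M : Subgroup G, L < M → M ≤ H → M = H := by
            intro M hLM hMH
            by_contra hne
            have hM : M ∈ {L : Subgroup G | K ≤ L ∧ L < H} :=
              ⟨hKL.trans hLM.le, lt_of_le_of_ne hMH hne⟩
            exact (lt_irrefl L) (lt_of_lt_of_le hLM (hmax hM hLM.le))
          obtain ⟨hKL', hLH'⟩ := hsat K L H hKH hKL hLH.le
          have hgen : T'.rel L H := hT' L H ⟨hLH', hLH, hirr⟩
          have hcardL : (L : Set G).ncard < (H : Set G).ncard := by
            refine Set.ncard_lt_ncard ?_ (Set.toFinite _)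
            exact SetLike.coe_ssubset_coe.mpr hLH
          exact T'.trans K L H
            (ih (L : Set G).ncard (lt_of_lt_of_le hcardL hcard) K L le_rfl hKL') hgen
    exact main ((H : Set G).ncard) K H le_rfl hKH
  · intro h
    exact h T (fun A B hAB => hAB.1)
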